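/- The convex set {(x₁,x₂) ∈ ℝ² : x₁² - x₁³ - x₂² ≥ 0, x₁ ≥ 0} equals the set {(x₁,x₂) ∈ ℝ² : [[x₁, x₂, x₁],[x₂, x₁, 0],[x₁, 0, 1]] ⪰ 0}. -/

import Mathlib

/-- Exact LMI representation of the singular convex set
`{x₁² - x₁³ - x₂² ≥ 0, x₁ ≥ 0}`. -/
theorem lmi_representation_singular_cubic :
    {p : ℝ × ℝ | p.1^2 - p.1^3 - p.2^2 ≥ 0 ∧ p.1 ≥ 0}
      = {p : ℝ × ℝ |
          (!![p.1, p.2, p.1; p.2, p.1, 0; p.1, 0, 1] :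
            Matrix (Fin 3) (Fin 3) ℝ).PosSemidef} := by
  ext ⟨a, b⟩
  simp only [Set.mem_setOf_eq]
  constructor
  · rintro ⟨h1, h2⟩
    have ha1 : a ≤ 1 ∨ a = 0 := by
      rcases eq_or_lt_of_le h2 with h | h
      · right; exact h.symm
      · left
        by_contra hgt
        push_neg at hgt
        nlinarith [mul_pos (mul_pos h h) (show (0:ℝ) < a - 1 by linarith), sq_nonneg b]
    have hp : 0 ≤ a - a^2 := by
      rcases ha1 with h | h
      · nlinarith
      · simp [h]
    rw [Matrix.posSemidef_iff_dotProduct_mulVec]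
    constructor
    · show Matrix.conjTranspose _ = _
      ext i j
      fin_cases i <;> fin_cases j <;> simp [Matrix.conjTranspose_apply]
    · intro v
      have key : (0:ℝ) ≤ a * (v 0)^2 + a * (v 1)^2 + (v 2)^2
          + 2 * b * v 0 * v 1 + 2 * a * v 0 * v 2 := by
        rcases eq_or_lt_of_le hp with h0 | h0
        · have hb : b = 0 := by nlinarith
          subst hb
          nlinarith [sq_nonneg (v 2 + a * v 0), mul_nonneg h2 (sq_nonneg (v 1)),
            mul_nonneg hp (sq_nonneg (v 0))]
        · nlinarith [mul_nonneg hp (sq_nonneg (v 2 + a * v 0)),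
            sq_nonneg ((a - a^2) * v 0 + b * v 1),
            mul_nonneg h1 (sq_nonneg (v 1)), h0]
      have : dotProduct (star v)
          ((!![a, b, a; b, a, 0; a, 0, 1]).mulVec v)
          = a * (v 0)^2 + a * (v 1)^2 + (v 2)^2
          + 2 * b * v 0 * v 1 + 2 * a * v 0 * v 2 := by
        simp [dotProduct, Matrix.mulVec, Fin.sum_univ_three]
        ring
      rw [this]
      exact key
  · intro h
    have hQ : ∀ x y : ℝ, 0 ≤ (a - a^2) * x^2 + 2 * b * x * y + a * y^2 := by
      intro x y
      have h2 := h.dotProduct_mulVec_nonneg ![x, y, -(a * x)]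
      simp [dotProduct, Matrix.mulVec, Fin.sum_univ_three] at h2
      nlinarith [h2]
    have ha : (0:ℝ) ≤ a := by have := hQ 0 1; linarith
    have hp : (0:ℝ) ≤ a - a^2 := by have := hQ 1 0; linarith
    refine ⟨?_, ha⟩
    rcases eq_or_lt_of_le hp with h0 | h0
    · have hb : b = 0 := by
        by_contra hb
        have hx := hQ (-(a + 1) / (2 * b)) 1
        rw [← h0] at hx
        have hkey : 2 * b * (-(a + 1) / (2 * b)) = -(a + 1) := by
          field_simp
        rw [hkey] at hx
        simp at hx
        linarith
      nlinarith [h0]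
    · have := hQ b (-(a - a^2))
      nlinarith [this, h0]
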